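/- Assume additionally D3 < max(D1, D2) and D1 + D2 − σ² ≤ D3 ≤ (1/D1 + 1/D2 − 1/σ²)^{−1}. Then the vertex V1 of the Gaussian rate region satisfies: (σ² + s0 + s1)/(s0 + s1) = σ²/D1, and (σ² + s0 + s2)·(s0 + s1) / (s0·(σT1 + σT2)²) = (D1/D3) · ψ(D1,D2,D3). That is, R1(V1) = (1/2)log(σ²/D1) and R2(V1) = (1/2)log(D1/D3) + (1/2)log ψ(D1,D2,D3). -/

import Mathlib

set_option maxHeartbeats 2000000 in
/-- The vertex `V1` of the Gaussian rate region satisfies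
`R1(V1) = (1/2)log(σ²/D1)` and `R2(V1) = (1/2)log(D1/D3) + (1/2)log ψ(D1,D2,D3)`. -/
theorem gaussian_vertex_V1_rates
    (σ2 D1 D2 D3 s0 s1 s2 ψ : ℝ)
    (hσ : 0 < σ2)
    (hD3pos : 0 < D3) (hD3leD1 : D3 ≤ D1) (hD1 : D1 < σ2)
    (hD3leD2 : D3 ≤ D2) (hD2 : D2 < σ2)
    (hs0 : s0 = D3 * σ2 / (σ2 - D3))
    (hs1 : s1 = D1 * σ2 / (σ2 - D1) - s0)
    (hs2 : s2 = D2 * σ2 / (σ2 - D2) - s0)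
    (hψ : ψ = (σ2 - D3) ^ 2 /
      ((σ2 - D3) ^ 2 -
        (Real.sqrt ((σ2 - D1) * (σ2 - D2)) - Real.sqrt ((D1 - D3) * (D2 - D3))) ^ 2))
    (hmax : D3 < max D1 D2)
    (hlow : D1 + D2 - σ2 ≤ D3)
    (hup : D3 ≤ (1 / D1 + 1 / D2 - 1 / σ2)⁻¹) :
    (σ2 + s0 + s1) / (s0 + s1) = σ2 / D1 ∧
    (σ2 + s0 + s2) * (s0 + s1) / (s0 * (Real.sqrt s1 + Real.sqrt s2) ^ 2)
      = (D1 / D3) * ψ ∧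
    (1 / 2) * Real.log ((σ2 + s0 + s1) / (s0 + s1)) = (1 / 2) * Real.log (σ2 / D1) ∧
    (1 / 2) * Real.log
        ((σ2 + s0 + s2) * (s0 + s1) / (s0 * (Real.sqrt s1 + Real.sqrt s2) ^ 2))
      = (1 / 2) * Real.log (D1 / D3) + (1 / 2) * Real.log ψ := by
  have ha : 0 < σ2 - D1 := by linarith
  have hb : 0 < σ2 - D2 := by linarith
  have hc : 0 < σ2 - D3 := by linarith
  have hu : 0 ≤ D1 - D3 := by linarith
  have hv : 0 ≤ D2 - D3 := by linarith
  have hD1pos : 0 < D1 := by linarith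
  have ha' : σ2 - D1 ≠ 0 := ne_of_gt ha
  have hb' : σ2 - D2 ≠ 0 := ne_of_gt hb
  have hc' : σ2 - D3 ≠ 0 := ne_of_gt hc
  have hσ' : σ2 ≠ 0 := ne_of_gt hσ
  have hD1' : D1 ≠ 0 := ne_of_gt hD1pos
  have hD3' : D3 ≠ 0 := ne_of_gt hD3pos
  have huv : 0 < (D1 - D3) + (D2 - D3) := by
    rcases lt_max_iff.mp hmax with h | h <;> linarith
  -- basic rewritten forms
  have hS1 : s0 + s1 = D1 * σ2 / (σ2 - D1) := by rw [hs1]; ring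
  have hA1 : σ2 + s0 + s1 = σ2 ^ 2 / (σ2 - D1) := by
    rw [hs1, hs0]; field_simp; ring
  have hA2 : σ2 + s0 + s2 = σ2 ^ 2 / (σ2 - D2) := by
    rw [hs2, hs0]; field_simp; ring
  have hs1' : s1 = σ2 ^ 2 * (D1 - D3) / ((σ2 - D1) * (σ2 - D3)) := by
    rw [hs1, hs0]; field_simp; ring
  have hs2' : s2 = σ2 ^ 2 * (D2 - D3) / ((σ2 - D2) * (σ2 - D3)) := by
    rw [hs2, hs0]; field_simp; ring
  have hs1nn : 0 ≤ s1 := by rw [hs1']; positivity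
  have hs2nn : 0 ≤ s2 := by rw [hs2']; positivity
  set sA := Real.sqrt ((σ2 - D1) * (σ2 - D2)) with hsAdef
  set sB := Real.sqrt ((D1 - D3) * (D2 - D3)) with hsBdef
  have hsA : sA ^ 2 = (σ2 - D1) * (σ2 - D2) := Real.sq_sqrt (by positivity)
  have hsB : sB ^ 2 = (D1 - D3) * (D2 - D3) := Real.sq_sqrt (by positivity)
  have hsApos : 0 < sA := Real.sqrt_pos.mpr (by positivity)
  have hsA' : sA ≠ 0 := ne_of_gt hsApos
  have hsBnn : 0 ≤ sB := Real.sqrt_nonneg _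
  have hablt : (σ2 - D1) * (σ2 - D2) < (σ2 - D3) ^ 2 := by nlinarith
  have huvlt : (D1 - D3) * (D2 - D3) < (σ2 - D3) ^ 2 := by nlinarith
  have hsAlt : sA < σ2 - D3 := by
    rw [hsAdef, show (σ2 - D3) = Real.sqrt ((σ2 - D3) ^ 2) from (Real.sqrt_sq hc.le).symm]
    exact Real.sqrt_lt_sqrt (by positivity) hablt
  have hsBlt : sB < σ2 - D3 := by
    rw [hsBdef, show (σ2 - D3) = Real.sqrt ((σ2 - D3) ^ 2) from (Real.sqrt_sq hc.le).symm]
    exact Real.sqrt_lt_sqrt (by positivity) huvlt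
  have hX : 0 < (σ2 - D3) ^ 2 - (sA - sB) ^ 2 := by
    nlinarith [mul_pos (show (0:ℝ) < (σ2 - D3) - sA + sB by linarith)
      (show (0:ℝ) < (σ2 - D3) + sA - sB by linarith)]
  have hX' : (σ2 - D3) ^ 2 - (sA - sB) ^ 2 ≠ 0 := ne_of_gt hX
  -- product of square roots
  have hprod : Real.sqrt s1 * Real.sqrt s2
      = σ2 ^ 2 * sB / ((σ2 - D3) * sA) := by
    rw [← Real.sqrt_mul hs1nn]
    have heq : s1 * s2 = (σ2 ^ 2 * sB / ((σ2 - D3) * sA)) ^ 2 := by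
      rw [hs1', hs2', div_pow, mul_pow, mul_pow, hsB, hsA]
      field_simp
    rw [heq, Real.sqrt_sq (by positivity)]
  have hsum : (Real.sqrt s1 + Real.sqrt s2) ^ 2
      = s1 + s2 + 2 * (Real.sqrt s1 * Real.sqrt s2) := by
    rw [add_sq, Real.sq_sqrt hs1nn, Real.sq_sqrt hs2nn]; ring
  have e1 : (σ2 - D3) ^ 2 - (sA - sB) ^ 2
      = (D1 - D3) * (σ2 - D2) + (D2 - D3) * (σ2 - D1) + 2 * (sA * sB) := by
    linear_combination (-1 : ℝ) * hsA - hsB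
  -- key expression for the denominator
  have hkey0 : (Real.sqrt s1 + Real.sqrt s2) ^ 2
      = σ2 ^ 2 * ((D1 - D3) * (σ2 - D2) + (D2 - D3) * (σ2 - D1) + 2 * (sA * sB))
          / ((σ2 - D1) * (σ2 - D2) * (σ2 - D3)) := by
    rw [hsum, hprod, hs1', hs2']
    field_simp
    linear_combination (-(2 * sB)) * hsA
  have hkey : (Real.sqrt s1 + Real.sqrt s2) ^ 2
      = σ2 ^ 2 * ((σ2 - D3) ^ 2 - (sA - sB) ^ 2)
          / ((σ2 - D1) * (σ2 - D2) * (σ2 - D3)) := by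
    rw [hkey0, e1]
  have hψpos : 0 < ψ := by rw [hψ]; positivity
  have h1 : (σ2 + s0 + s1) / (s0 + s1) = σ2 / D1 := by
    rw [hA1, hS1]
    field_simp
  have h2 : (σ2 + s0 + s2) * (s0 + s1) / (s0 * (Real.sqrt s1 + Real.sqrt s2) ^ 2)
      = (D1 / D3) * ψ := by
    rw [hA2, hS1, hs0, hkey, hψ]
    field_simp
  refine ⟨h1, h2, by rw [h1], ?_⟩
  rw [h2, Real.log_mul (by positivity) (ne_of_gt hψpos)]
  ring
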